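/- Let (X, μ) be a finite measure space, let (δ_n) ⊂ (0, 1/2) with δ_n → 0, let φ_n : X → ℝ be measurable functions converging to φ almost everywhere, and suppose there is C > 0 with ∫_X Φ_{δ_n}(φ_n(x)) dμ(x) ≤ C for all n. Then μ({x : φ(x) = 0}) = 0 and μ({x : φ(x) = 1}) = 0; combined with the a.e. bounds 0 ≤ φ ≤ 1, the limit satisfies 0 < φ(x) < 1 for μ-almost every x ∈ X (segregation property). -/

import Mathlib

open MeasureTheory Filter

/-- The degenerate mobility `M(φ) = φ²(1-φ)²`. -/
noncomputable def M (φ : ℝ) : ℝ := φ ^ 2 * (1 - φ) ^ 2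

/-- The truncated (nondegenerate) mobility `M_δ`. -/
noncomputable def Md (δ φ : ℝ) : ℝ :=
  if φ ≤ δ then M δ else if φ ≤ 1 - δ then M φ else M (1 - δ)

/-- The entropy density with cutoff `Φ_δ(φ) = ∫_{1/2}^{φ} ∫_{1/2}^{s} dr ds / M_δ(r)`. -/
noncomputable def Phid (δ φ : ℝ) : ℝ :=
  ∫ s in (1 / 2 : ℝ)..φ, ∫ r in (1 / 2 : ℝ)..s, 1 / Md δ r

lemma M_pos {δ : ℝ} (h0 : 0 < δ) (h1 : δ < 1) : 0 < M δ := by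
  have : 0 < 1 - δ := by linarith
  exact mul_pos (pow_pos h0 2) (pow_pos this 2)

lemma Md_lb {δ : ℝ} (h0 : 0 < δ) (h2 : δ < 1/2) (r : ℝ) : M δ ≤ Md δ r := by
  unfold Md
  split_ifs with h h'
  · exact le_rfl
  · push_neg at h
    unfold M
    nlinarith [mul_nonneg (mul_nonneg (sub_nonneg.2 h.le) (by linarith : (0:ℝ) ≤ 1 - δ - r))
      (by nlinarith : (0:ℝ) ≤ r * (1 - r) + δ * (1 - δ))]
  · exact le_of_eq (by unfold M; ring)

lemma Md_pos {δ : ℝ} (h0 : 0 < δ) (h2 : δ < 1/2) (r : ℝ) : 0 < Md δ r :=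
  lt_of_lt_of_le (M_pos h0 (by linarith)) (Md_lb h0 h2 r)

lemma Md_eq_M {δ x : ℝ} (hx1 : δ ≤ x) (hx2 : x ≤ 1 - δ) : Md δ x = M x := by
  unfold Md
  rcases le_or_gt x δ with h | h
  · rw [if_pos h, le_antisymm h hx1]
  · rw [if_neg (not_le.2 h), if_pos hx2]

lemma Md_meas (δ : ℝ) : Measurable fun r => 1 / Md δ r := by
  apply Measurable.div measurable_const
  unfold Md
  apply Measurable.ite (measurableSet_le measurable_id measurable_const) measurable_const
  apply Measurable.ite (measurableSet_le measurable_id measurable_const)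
  · unfold M; fun_prop
  · exact measurable_const

lemma Md_intInt {δ : ℝ} (h0 : 0 < δ) (h2 : δ < 1/2) (a b : ℝ) :
    IntervalIntegrable (fun r => 1 / Md δ r) volume a b := by
  rw [intervalIntegrable_iff]
  apply Integrable.mono' (g := fun _ => 1 / M δ)
  · exact integrableOn_const measure_Ioc_lt_top.ne
  · exact (Md_meas δ).aestronglyMeasurable
  · filter_upwards with r
    rw [Real.norm_eq_abs, abs_of_nonneg (le_of_lt (div_pos one_pos (Md_pos h0 h2 r)))]
    exact one_div_le_one_div_of_le (M_pos h0 (by linarith)) (Md_lb h0 h2 r)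

lemma phid_lower {ε δ φ : ℝ} (hε0 : 0 < ε) (hε8 : ε ≤ 1/8) (hδ0 : 0 < δ) (hδε : δ ≤ ε)
    (hφ : φ ≤ ε ∨ 1 - ε ≤ φ) : -Real.log ε - 2 ≤ Phid δ φ := by
  have hδ2 : δ < 1/2 := by linarith
  set g : ℝ → ℝ := fun s => ∫ r in (1/2:ℝ)..s, 1 / Md δ r with hgdef
  have hgc : Continuous g := intervalIntegral.continuous_primitive (Md_intInt hδ0 hδ2) _
  have hnn : ∀ r : ℝ, 0 ≤ 1 / Md δ r := fun r => le_of_lt (div_pos one_pos (Md_pos hδ0 hδ2 r))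
  have hl2 : Real.log 2 < 0.6931471808 := Real.log_two_lt_d9
  have hlog4 : Real.log (1/4:ℝ) = -(2 * Real.log 2) := by
    rw [one_div, Real.log_inv, show (4:ℝ) = 2^2 by norm_num, Real.log_pow]
    push_cast; ring
  have hgge : ∀ s : ℝ, 1/2 ≤ s → 0 ≤ g s := fun s hs =>
    intervalIntegral.integral_nonneg hs (fun u _ => hnn u)
  have hgle : ∀ s : ℝ, s ≤ 1/2 → 0 ≤ -g s := by
    intro s hs
    show 0 ≤ -∫ r in (1/2:ℝ)..s, 1 / Md δ r
    rw [← intervalIntegral.integral_symm]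
    exact intervalIntegral.integral_nonneg hs (fun u _ => hnn u)
  rcases hφ with hφ | hφ
  · -- left case : φ ≤ ε
    have key : ∀ s ∈ Set.Icc ε (1/4:ℝ), s⁻¹ - 2 ≤ -g s := by
      intro s hs
      obtain ⟨hs1, hs2⟩ := hs
      have hs0 : 0 < s := lt_of_lt_of_le hε0 hs1
      have hint2 : IntervalIntegrable (fun r : ℝ => (r^2)⁻¹) volume s (1/2) := by
        apply ContinuousOn.intervalIntegrable
        apply ((continuousOn_id.pow 2).inv₀)
        intro x hx
        rw [Set.uIcc_of_le (by linarith : s ≤ (1/2:ℝ))] at hx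
        exact pow_ne_zero 2 (ne_of_gt (lt_of_lt_of_le hs0 hx.1))
      have e1 : ∫ r in s..(1/2:ℝ), (r^2)⁻¹ = s⁻¹ - 2 := by
        rw [intervalIntegral.integral_eq_sub_of_hasDerivAt (f := fun r => -r⁻¹)
          (fun x hx => by
            rw [Set.uIcc_of_le (by linarith : s ≤ (1/2:ℝ))] at hx
            exact (hasDerivAt_inv (ne_of_gt (lt_of_lt_of_le hs0 hx.1))).neg.congr_deriv (by ring)) hint2]
        show -(1/2:ℝ)⁻¹ - -s⁻¹ = s⁻¹ - 2
        ring
      have e2 : ∫ r in s..(1/2:ℝ), (r^2)⁻¹ ≤ ∫ r in s..(1/2:ℝ), 1 / Md δ r := by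
        apply intervalIntegral.integral_mono_on (by linarith) hint2 (Md_intInt hδ0 hδ2 _ _)
        intro x hx
        have hx0 : 0 < x := lt_of_lt_of_le hs0 hx.1
        have hMd : Md δ x = M x :=
          Md_eq_M (le_trans hδε (hs1.trans hx.1)) (by linarith [hx.2])
        rw [hMd, one_div]
        apply inv_anti₀ (M_pos hx0 (by linarith [hx.2]))
        have h1x : (1 - x)^2 ≤ 1 := by nlinarith [hx.1, hx.2]
        unfold M
        exact mul_le_of_le_one_right (sq_nonneg x) h1x
      have hneg : -g s = ∫ r in s..(1/2:ℝ), 1 / Md δ r := by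
        show -∫ r in (1/2:ℝ)..s, 1 / Md δ r = _
        rw [← intervalIntegral.integral_symm]
      rw [hneg]
      exact le_trans (le_of_eq e1.symm) e2
    have hint3 : IntervalIntegrable (fun s : ℝ => s⁻¹ - 2) volume ε (1/4) := by
      apply ContinuousOn.intervalIntegrable
      apply ContinuousOn.sub _ continuousOn_const
      apply continuousOn_id.inv₀
      intro x hx
      rw [Set.uIcc_of_le (by linarith : ε ≤ (1/4:ℝ))] at hx
      exact ne_of_gt (lt_of_lt_of_le hε0 hx.1)
    have c1 : -Real.log ε - 2 ≤ ∫ s in ε..(1/4:ℝ), (s⁻¹ - 2) := by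
      rw [intervalIntegral.integral_eq_sub_of_hasDerivAt (f := fun s => Real.log s - 2*s)
        (fun x hx => by
          rw [Set.uIcc_of_le (by linarith : ε ≤ (1/4:ℝ))] at hx
          exact (Real.hasDerivAt_log (ne_of_gt (lt_of_lt_of_le hε0 hx.1))).sub
            (by simpa using (hasDerivAt_id x).const_mul 2)) hint3]
      show -Real.log ε - 2 ≤ (Real.log (1/4) - 2*(1/4)) - (Real.log ε - 2*ε)
      linarith [hlog4, hl2, hε0]
    have c2 : ∫ s in ε..(1/4:ℝ), (s⁻¹ - 2) ≤ ∫ s in ε..(1/4:ℝ), -g s :=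
      intervalIntegral.integral_mono_on (by linarith) hint3
        ((hgc.neg).intervalIntegrable _ _) key
    have c3 : ∫ s in ε..(1/4:ℝ), -g s ≤ ∫ s in φ..(1/2:ℝ), -g s := by
      apply intervalIntegral.integral_mono_interval hφ (by linarith) (by norm_num)
        _ ((hgc.neg).intervalIntegrable _ _)
      show ∀ᵐ x ∂(volume.restrict (Set.Ioc φ (1/2:ℝ))), 0 ≤ -g x
      rw [MeasureTheory.ae_restrict_iff' measurableSet_Ioc]
      exact Filter.Eventually.of_forall (fun s hs => hgle s hs.2)
    have hout : Phid δ φ = ∫ s in φ..(1/2:ℝ), -g s := by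
      show ∫ s in (1/2:ℝ)..φ, g s = _
      rw [intervalIntegral.integral_symm φ (1/2:ℝ), ← intervalIntegral.integral_neg]
    rw [hout]
    exact c1.trans (c2.trans c3)
  · -- right case : 1 - ε ≤ φ
    have key : ∀ s ∈ Set.Icc (3/4:ℝ) (1-ε), (1-s)⁻¹ - 2 ≤ g s := by
      intro s hs
      obtain ⟨hs1, hs2⟩ := hs
      have hs0 : s < 1 := by linarith
      have hint2 : IntervalIntegrable (fun r : ℝ => ((1-r)^2)⁻¹) volume (1/2) s := by
        apply ContinuousOn.intervalIntegrable
        apply (((continuousOn_const.sub continuousOn_id).pow 2).inv₀)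
        intro x hx
        rw [Set.uIcc_of_le (by linarith : (1/2:ℝ) ≤ s)] at hx
        have hx1 : x < 1 := lt_of_le_of_lt hx.2 hs0
        have hne : (1:ℝ) - x ≠ 0 := by intro h; rw [sub_eq_zero] at h; linarith
        exact pow_ne_zero 2 (by simpa using hne)
      have e1 : ∫ r in (1/2:ℝ)..s, ((1-r)^2)⁻¹ = (1-s)⁻¹ - 2 := by
        rw [intervalIntegral.integral_eq_sub_of_hasDerivAt (f := fun r => (1-r)⁻¹)
          (fun x hx => by
            rw [Set.uIcc_of_le (by linarith : (1/2:ℝ) ≤ s)] at hx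
            have hne : (1 - x) ≠ 0 := by
              have : x < 1 := lt_of_le_of_lt hx.2 hs0
              intro h; rw [sub_eq_zero] at h; linarith
            have h1 : HasDerivAt (fun r : ℝ => 1 - r) (-1) x := (hasDerivAt_id x).const_sub 1
            have h2 := h1.inv hne
            exact h2.congr_deriv (by simp)) hint2]
        show (1-s)⁻¹ - (1-(1/2:ℝ))⁻¹ = (1-s)⁻¹ - 2
        norm_num
      have e2 : ∫ r in (1/2:ℝ)..s, ((1-r)^2)⁻¹ ≤ ∫ r in (1/2:ℝ)..s, 1 / Md δ r := by
        apply intervalIntegral.integral_mono_on (by linarith) hint2 (Md_intInt hδ0 hδ2 _ _)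
        intro x hx
        have hx1 : x < 1 := lt_of_le_of_lt hx.2 hs0
        have hx0 : 0 < x := by linarith [hx.1]
        have hMd : Md δ x = M x :=
          Md_eq_M (by linarith [hx.1]) (by linarith [hx.2, hs2])
        rw [hMd, one_div]
        apply inv_anti₀ (M_pos hx0 hx1)
        have h1x : x^2 ≤ 1 := by nlinarith [hx0.le, hx1.le]
        unfold M
        exact mul_le_of_le_one_left (sq_nonneg (1 - x)) h1x
      exact le_trans (le_of_eq e1.symm) e2
    have hint3 : IntervalIntegrable (fun s : ℝ => (1-s)⁻¹ - 2) volume (3/4) (1-ε) := by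
      apply ContinuousOn.intervalIntegrable
      apply ContinuousOn.sub _ continuousOn_const
      apply (continuousOn_const.sub continuousOn_id).inv₀
      intro x hx
      rw [Set.uIcc_of_le (by linarith : (3/4:ℝ) ≤ 1-ε)] at hx
      have : x < 1 := by linarith [hx.2]
      intro h; simp only [Pi.sub_apply, id, sub_eq_zero] at h; linarith
    have c1 : -Real.log ε - 2 ≤ ∫ s in (3/4:ℝ)..(1-ε), ((1-s)⁻¹ - 2) := by
      rw [intervalIntegral.integral_eq_sub_of_hasDerivAt
        (f := fun s => -Real.log (1-s) - 2*s)
        (fun x hx => by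
          rw [Set.uIcc_of_le (by linarith : (3/4:ℝ) ≤ 1-ε)] at hx
          have hx1 : x < 1 := by linarith [hx.2]
          have hne : (1 - x) ≠ 0 := by intro h; rw [sub_eq_zero] at h; linarith
          have h1 : HasDerivAt (fun r : ℝ => 1 - r) (-1) x := (hasDerivAt_id x).const_sub 1
          have h2 := ((Real.hasDerivAt_log hne).comp x h1).neg.sub
            ((hasDerivAt_id x).const_mul 2)
          exact h2.congr_deriv (by ring)) hint3]
      show -Real.log ε - 2 ≤ (-Real.log (1-(1-ε)) - 2*(1-ε)) - (-Real.log (1-3/4) - 2*(3/4))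
      rw [show (1:ℝ) - (1-ε) = ε by ring, show (1:ℝ) - 3/4 = 1/4 by norm_num]
      linarith [hlog4, hl2, hε0]
    have c2 : ∫ s in (3/4:ℝ)..(1-ε), ((1-s)⁻¹ - 2) ≤ ∫ s in (3/4:ℝ)..(1-ε), g s :=
      intervalIntegral.integral_mono_on (by linarith) hint3
        (hgc.intervalIntegrable _ _) key
    have c3 : ∫ s in (3/4:ℝ)..(1-ε), g s ≤ ∫ s in (1/2:ℝ)..φ, g s := by
      apply intervalIntegral.integral_mono_interval (by norm_num) (by linarith) hφ
        _ (hgc.intervalIntegrable _ _)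
      show ∀ᵐ x ∂(volume.restrict (Set.Ioc (1/2:ℝ) φ)), 0 ≤ g x
      rw [MeasureTheory.ae_restrict_iff' measurableSet_Ioc]
      exact Filter.Eventually.of_forall (fun s hs => hgge s hs.1.le)
    show -Real.log ε - 2 ≤ ∫ s in (1/2:ℝ)..φ, g s
    exact c1.trans (c2.trans c3)

/-- Segregation property: the a.e. limit of entropy-bounded approximations satisfies
`0 < φ < 1` a.e.; in particular the sets `{φ = 0}` and `{φ = 1}` are null. -/
theorem segregation_property {X : Type*} [MeasurableSpace X] (μ : Measure X)
    [IsFiniteMeasure μ] (δ : ℕ → ℝ) (hδ : ∀ n, δ n ∈ Set.Ioo (0 : ℝ) (1 / 2))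
    (hδ0 : Tendsto δ atTop (nhds 0))
    (φn : ℕ → X → ℝ) (hφn : ∀ n, Measurable (φn n)) (φ : X → ℝ)
    (hae : ∀ᵐ x ∂μ, Tendsto (fun n => φn n x) atTop (nhds (φ x)))
    (C : ℝ) (hC : 0 < C)
    (hent : ∀ n, ∫⁻ x, ENNReal.ofReal (Phid (δ n) (φn n x)) ∂μ ≤ ENNReal.ofReal C) :
    μ {x | φ x = 0} = 0 ∧ μ {x | φ x = 1} = 0 ∧ ∀ᵐ x ∂μ, 0 < φ x ∧ φ x < 1 := by
  set f : ℕ → X → ENNReal := fun n x => ENNReal.ofReal (Phid (δ n) (φn n x)) with hfdef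
  have hPhidc : ∀ d : ℝ, 0 < d → d < 1/2 → Continuous (Phid d) := by
    intro d h1 h2
    have hg : Continuous fun s => ∫ r in (1/2:ℝ)..s, 1 / Md d r :=
      intervalIntegral.continuous_primitive (Md_intInt h1 h2) _
    exact intervalIntegral.continuous_primitive (fun a b => hg.intervalIntegrable a b) _
  have hmeas : ∀ n, Measurable (f n) := fun n =>
    ENNReal.measurable_ofReal.comp
      ((hPhidc _ (hδ n).1 (hδ n).2).measurable.comp (hφn n))
  have hFatou := MeasureTheory.lintegral_liminf_le (μ := μ) (u := atTop) hmeas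
  have hlimC : Filter.liminf (fun n => ∫⁻ x, f n x ∂μ) Filter.atTop ≤ ENNReal.ofReal C :=
    Filter.liminf_le_of_frequently_le (Filter.Frequently.of_forall (fun n => hent n))
  have hfin : (∫⁻ x, Filter.liminf (fun n => f n x) Filter.atTop ∂μ) < ⊤ :=
    lt_of_le_of_lt (hFatou.trans hlimC) ENNReal.ofReal_lt_top
  have hae2 : ∀ᵐ x ∂μ, Filter.liminf (fun n => f n x) Filter.atTop < ⊤ :=
    MeasureTheory.ae_lt_top (Measurable.liminf hmeas) hfin.ne
  have hptw : ∀ x, Tendsto (fun n => φn n x) atTop (nhds (φ x)) →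
      Filter.liminf (fun n => f n x) Filter.atTop < ⊤ → 0 < φ x ∧ φ x < 1 := by
    intro x hx hlim
    by_contra hcon
    push_neg at hcon
    have hφx : φ x ≤ 0 ∨ 1 ≤ φ x := by
      rcases le_or_gt (φ x) 0 with h | h
      · exact Or.inl h
      · exact Or.inr (hcon h)
    have hcle : ∀ c : ℝ, ENNReal.ofReal c ≤ Filter.liminf (fun n => f n x) Filter.atTop := by
      intro c
      set ε : ℝ := min (1/8) (Real.exp (-(c+2))) with hεdef
      have hε0 : 0 < ε := lt_min (by norm_num) (Real.exp_pos _)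
      have hε8 : ε ≤ 1/8 := min_le_left _ _
      have hc : c ≤ -Real.log ε - 2 := by
        have h1 : Real.log ε ≤ Real.log (Real.exp (-(c+2))) :=
          Real.log_le_log hε0 (min_le_right _ _)
        rw [Real.log_exp] at h1
        linarith
      have hev : ∀ᶠ n in Filter.atTop, ENNReal.ofReal (-Real.log ε - 2) ≤ f n x := by
        have h1 : ∀ᶠ n in Filter.atTop, δ n < ε := hδ0.eventually_lt_const hε0
        have h2 : ∀ᶠ n in Filter.atTop, φn n x ≤ ε ∨ 1 - ε ≤ φn n x := by
          rcases hφx with h | h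
          · exact (hx.eventually_lt_const (by linarith : φ x < ε)).mono
              fun n hn => Or.inl hn.le
          · exact (hx.eventually_const_lt (by linarith : 1 - ε < φ x)).mono
              fun n hn => Or.inr hn.le
        filter_upwards [h1, h2] with n hn1 hn2
        exact ENNReal.ofReal_le_ofReal (phid_lower hε0 hε8 (hδ n).1 hn1.le hn2)
      calc ENNReal.ofReal c ≤ ENNReal.ofReal (-Real.log ε - 2) := ENNReal.ofReal_le_ofReal hc
        _ ≤ Filter.liminf (fun n => f n x) Filter.atTop := Filter.le_liminf_of_le (h := hev)
    set L := Filter.liminf (fun n => f n x) Filter.atTop with hL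
    have h2 := hcle (L.toReal + 1)
    rw [ENNReal.ofReal_add ENNReal.toReal_nonneg zero_le_one, ENNReal.ofReal_one,
      ENNReal.ofReal_toReal hlim.ne] at h2
    exact absurd h2 (not_le.2 (ENNReal.lt_add_right hlim.ne one_ne_zero))
  have hmain : ∀ᵐ x ∂μ, 0 < φ x ∧ φ x < 1 := by
    filter_upwards [hae, hae2] with x h1 h2
    exact hptw x h1 h2
  have hnull : μ {x | ¬(0 < φ x ∧ φ x < 1)} = 0 := MeasureTheory.ae_iff.mp hmain
  refine ⟨?_, ?_, hmain⟩
  · apply MeasureTheory.measure_mono_null _ hnull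
    intro x hx
    simp only [Set.mem_setOf_eq] at hx ⊢
    rw [hx]; intro h; exact lt_irrefl 0 h.1
  · apply MeasureTheory.measure_mono_null _ hnull
    intro x hx
    simp only [Set.mem_setOf_eq] at hx ⊢
    rw [hx]; intro h; exact lt_irrefl 1 h.2
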